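/- Let n, Δ ≥ 2, let (T, r) be a rooted tree on n vertices with Δ(T) ≤ Δ, and let n₀ ∈ ℕ with n ≤ n₀ < n⁴. Then there exist pairwise vertex-disjoint rooted subtrees (T_1, t_1),...,(T_k, t_k) of T such that, setting n_i := n₀ - |T_1 ∪ ... ∪ T_i| + 1: (i) V(T) = ∪_{i=1}^k V(T_i); (ii) T_i ⊆ T(t_i) for every i; (iii) the depth of t_1,...,t_k is non-decreasing; and (iv) n_{i-1}^{1/4} ≤ |T_i| ≤ (5/2)·Δ·n_{i-1}^{1/4} for every i ∈ [k]. -/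
import Mathlib

set_option maxHeartbeats 1000000

open Finset

section TPQ

variable {V : Type*} [Fintype V] [DecidableEq V]

open Classical in
noncomputable def subtreeIn (par : V → V) (rem : Finset V) (v : V) : Finset V :=
  rem.filter (fun w => ∃ j : ℕ, par^[j] w = v)

lemma mem_subtreeIn {par : V → V} {rem : Finset V} {v w : V} :
    w ∈ subtreeIn par rem v ↔ w ∈ rem ∧ ∃ j : ℕ, par^[j] w = v := by
  classical
  simp [subtreeIn]

lemma subtreeIn_mono {par : V → V} {rem rem' : Finset V} (h : rem' ⊆ rem) (v : V) :
    subtreeIn par rem' v ⊆ subtreeIn par rem v := by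
  intro w hw
  rw [mem_subtreeIn] at hw ⊢
  exact ⟨h hw.1, hw.2⟩

/-- depth of a child is depth of parent + 1 -/
lemma depth_child {par : V → V} {r : V}
    (hacyc : ∀ v : V, ∃ j : ℕ, par^[j] v = r) {u : V} (hu : u ≠ r) :
    Nat.find (hacyc u) = Nat.find (hacyc (par u)) + 1 := by
  have h1 : Nat.find (hacyc u) ≠ 0 := by
    intro h0
    have := Nat.find_spec (hacyc u)
    rw [h0] at this
    exact hu this
  have h2 : Nat.find (hacyc (par u)) ≤ Nat.find (hacyc u) - 1 := by
    apply Nat.find_le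
    have := Nat.find_spec (hacyc u)
    have heq : Nat.find (hacyc u) = (Nat.find (hacyc u) - 1) + 1 := by omega
    rw [heq, Function.iterate_succ_apply] at this
    exact this
  have h3 : Nat.find (hacyc u) ≤ Nat.find (hacyc (par u)) + 1 := by
    apply Nat.find_le
    rw [Function.iterate_succ_apply]
    exact Nat.find_spec (hacyc (par u))
  omega

lemma depth_root {par : V → V} {r : V}
    (hacyc : ∀ v : V, ∃ j : ℕ, par^[j] v = r) (hroot : par r = r) :
    Nat.find (hacyc r) = 0 := by
  have : (fun j => par^[j] r = r) 0 := rfl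
  exact Nat.eq_zero_of_le_zero (Nat.find_le this)

lemma depth_eq_zero {par : V → V} {r : V}
    (hacyc : ∀ v : V, ∃ j : ℕ, par^[j] v = r) {u : V}
    (h : Nat.find (hacyc u) = 0) : u = r := by
  have := Nat.find_spec (hacyc u)
  rw [h] at this
  exact this

/-- prefix sums over a snoc family -/
lemma sum_filter_lt_castSucc {m : ℕ} (f : Fin (m + 1) → ℝ) (i : Fin m) :
    ∑ j ∈ univ.filter (fun j => j < i.castSucc), f j
      = ∑ j ∈ univ.filter (fun j => j < i), f j.castSucc := by
  have hset : (univ.filter (fun j => j < i) : Finset (Fin m)).map Fin.castSuccEmb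
      = univ.filter (fun j => j < i.castSucc) := by
    ext j
    simp only [mem_map, mem_filter, mem_univ, true_and, Fin.castSuccEmb_apply]
    constructor
    · rintro ⟨a, ha, rfl⟩
      exact Fin.castSucc_lt_castSucc_iff.mpr ha
    · intro hj
      have hj' : j.val < i.val := hj
      refine ⟨⟨j.val, by omega⟩, ?_, ?_⟩
      · simpa [Fin.lt_def] using hj'
      · apply Fin.ext
        simp
  rw [← hset, Finset.sum_map]
  rfl

lemma sum_filter_lt_last {m : ℕ} (f : Fin (m + 1) → ℝ) :
    ∑ j ∈ univ.filter (fun j => j < Fin.last m), f j = ∑ j : Fin m, f j.castSucc := by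
  have hset : (univ : Finset (Fin m)).map Fin.castSuccEmb
      = univ.filter (fun j => j < Fin.last m) := by
    ext j
    simp only [mem_map, mem_filter, mem_univ, true_and, Fin.castSuccEmb_apply]
    constructor
    · rintro ⟨a, _, rfl⟩
      exact Fin.castSucc_lt_last a
    · intro hj
      have hj' : j.val < m := hj
      refine ⟨⟨j.val, hj'⟩, ?_⟩
      apply Fin.ext
      simp
  rw [← hset, Finset.sum_map]
  rfl

lemma pow4_quarter {x : ℝ} (hx : 0 ≤ x) : (x ^ (4:ℕ)) ^ ((1:ℝ)/4) = x := by
  rw [← Real.rpow_natCast x 4, ← Real.rpow_mul hx]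
  norm_num

theorem tpq_aux (Δ : ℕ) (hΔ : 2 ≤ Δ)
    (r : V) (par : V → V) (hroot : par r = r)
    (hacyc : ∀ v : V, ∃ j : ℕ, par^[j] v = r)
    (hdeg : ∀ v : V,
      (Finset.univ.filter (fun u => u ≠ v ∧ par u = v)).card
        + (if v = r then 0 else 1) ≤ Δ) :
    ∀ (N : ℕ) (B' : ℕ) (rem : Finset V), rem.card = N → 1 ≤ B' → r ∈ rem →
      (∀ v ∈ rem, par v ∈ rem) → B' + N ≤ N ^ 4 →
    ∃ (k : ℕ) (S : Fin k → Finset V) (tt : Fin k → V),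
      (∀ i, S i ⊆ rem) ∧
      (∀ v ∈ rem, ∃ i, v ∈ S i) ∧
      (∀ i j, i ≠ j → Disjoint (S i) (S j)) ∧
      (∀ i, tt i ∈ S i) ∧
      (∀ i, ∀ v ∈ S i, v ≠ tt i → par v ∈ S i) ∧
      (∀ i, ∀ v ∈ S i, ∃ j : ℕ, par^[j] v = tt i) ∧
      (∀ i j, i ≤ j → Nat.find (hacyc (tt i)) ≤ Nat.find (hacyc (tt j))) ∧
      (∀ i, tt i = r ∨ (⌈((B' : ℝ)) ^ ((1:ℝ)/4)⌉₊ + 1 ≤ (subtreeIn par rem (tt i)).card)) ∧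
      (∀ i,
        (((B' : ℝ) + rem.card - ∑ j ∈ Finset.univ.filter (fun j => j < i), ((S j).card : ℝ))
            ^ ((1 : ℝ) / 4) ≤ ((S i).card : ℝ) ∧
        ((S i).card : ℝ) ≤ (5 / 2) * Δ *
          (((B' : ℝ) + rem.card - ∑ j ∈ Finset.univ.filter (fun j => j < i), ((S j).card : ℝ))
            ^ ((1 : ℝ) / 4)))) := by
  intro N
  induction N using Nat.strong_induction_on with
  | _ N IH =>
  intro B' rem hcardrem hB hr hup hinv
  subst hcardrem
  set N := rem.card with hN
  -- basic real facts
  have hΔr : (2:ℝ) ≤ (Δ:ℝ) := by exact_mod_cast hΔ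
  have hN1 : 1 ≤ N := Finset.card_pos.mpr ⟨r, hr⟩
  have hBNnn : (0:ℝ) ≤ (B':ℝ) + N := by positivity
  set m : ℝ := ((B':ℝ) + N) ^ ((1:ℝ)/4) with hm
  have hm4 : m ^ (4:ℕ) = (B':ℝ) + N := by
    rw [hm, ← Real.rpow_natCast (((B':ℝ) + N) ^ ((1:ℝ)/4)) 4, ← Real.rpow_mul hBNnn]
    norm_num
  have hm0 : 0 ≤ m := Real.rpow_nonneg hBNnn _
  have hm1 : 1 ≤ m := by
    by_contra h
    push_neg at h
    have h4 : m ^ (4:ℕ) < 1 := pow_lt_one₀ hm0 h (by norm_num)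
    rw [hm4] at h4
    have hB1 : (1:ℝ) ≤ (B':ℝ) := by exact_mod_cast hB
    have hN1' : (1:ℝ) ≤ (N:ℝ) := by exact_mod_cast hN1
    linarith
  by_cases hbase : (N:ℝ) ≤ 5 / 2 * Δ * m
  · -- base case: one piece = rem
    refine ⟨1, fun _ => rem, fun _ => r, ?_, ?_, ?_, ?_, ?_, ?_, ?_, ?_, ?_⟩
    · intro i; exact Finset.Subset.refl _
    · intro v hv; exact ⟨0, hv⟩
    · intro i j hij; exact absurd (Subsingleton.elim i j) hij
    · intro i; exact hr
    · intro i v hv hne; exact hup v hv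
    · intro i v hv; exact hacyc v
    · intro i j _; exact le_refl _
    · intro i; exact Or.inl rfl
    · intro i
      have hempt : (univ.filter (fun j => j < i) : Finset (Fin 1)) = ∅ := by
        apply Finset.filter_false_of_mem
        intro j _
        have : j = i := Subsingleton.elim j i
        simp [this]
      rw [hempt]
      simp only [Finset.sum_empty, sub_zero]
      constructor
      · -- (B' + N)^{1/4} ≤ N
        have h4 : (B':ℝ) + N ≤ (N:ℝ) ^ (4:ℕ) := by exact_mod_cast hinv
        calc ((B':ℝ) + N) ^ ((1:ℝ)/4) ≤ ((N:ℝ) ^ (4:ℕ)) ^ ((1:ℝ)/4) :=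
              Real.rpow_le_rpow hBNnn h4 (by norm_num)
          _ = (N:ℝ) := pow4_quarter (by positivity)
      · exact hbase
  · -- main case
    push_neg at hbase
    set a : ℝ := (B':ℝ) ^ ((1:ℝ)/4) with ha
    have ha0 : 0 ≤ a := Real.rpow_nonneg (by positivity) _
    have ha4 : a ^ (4:ℕ) = (B':ℝ) := by
      rw [ha, ← Real.rpow_natCast ((B':ℝ) ^ ((1:ℝ)/4)) 4, ← Real.rpow_mul (by positivity)]
      norm_num
    have ha1 : 1 ≤ a := by
      by_contra h
      push_neg at h
      have h4 : a ^ (4:ℕ) < 1 := pow_lt_one₀ ha0 h (by norm_num)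
      rw [ha4] at h4
      have hB1 : (1:ℝ) ≤ (B':ℝ) := by exact_mod_cast hB
      linarith
    have ham : a ≤ m := by
      rw [ha, hm]
      have hN0 : (0:ℝ) ≤ (N:ℝ) := by positivity
      apply Real.rpow_le_rpow (by positivity) (by linarith) (by norm_num)
    set s : ℕ := ⌈a⌉₊ + 1 with hs
    have hsa : a + 1 ≤ (s:ℝ) := by
      have := Nat.le_ceil a
      push_cast [hs]
      linarith
    have hsa2 : (s:ℝ) ≤ a + 2 := by
      have := Nat.ceil_lt_add_one ha0
      push_cast [hs]
      linarith
    -- iterated parents stay in rem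
    have hup_iter : ∀ (t : ℕ), ∀ w ∈ rem, par^[t] w ∈ rem := by
      intro t
      induction t with
      | zero => intro w hw; exact hw
      | succ t ih =>
        intro w hw
        rw [Function.iterate_succ_apply]
        exact ih _ (hup w hw)
    -- the whole subtree of r is rem
    have hsubr : subtreeIn par rem r = rem := by
      ext w
      rw [mem_subtreeIn]
      exact ⟨fun h => h.1, fun h => ⟨h, hacyc w⟩⟩
    -- decomposition bound
    have hdecomp : ∀ v : V, (subtreeIn par rem v).card ≤
        1 + ∑ u ∈ univ.filter (fun u => u ≠ v ∧ par u = v), (subtreeIn par rem u).card := by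
      intro v
      have hsub : subtreeIn par rem v ⊆
          insert v ((univ.filter (fun u => u ≠ v ∧ par u = v)).biUnion (subtreeIn par rem)) := by
        intro w hw
        rw [mem_subtreeIn] at hw
        obtain ⟨hwrem, hex⟩ := hw
        by_cases hwv : w = v
        · simp [hwv]
        · have hex' : ∃ j, par^[j] w = v := hex
          set j₀ := Nat.find hex' with hj₀
          have hspec : par^[j₀] w = v := Nat.find_spec hex'
          have hj0 : j₀ ≠ 0 := by
            intro h0
            rw [h0] at hspec
            exact hwv hspec
          set u := par^[j₀ - 1] w with hu
          have hpu : par u = v := by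
            have h1 : par^[(j₀ - 1) + 1] w = v := by
              rw [(by omega : j₀ - 1 + 1 = j₀)]; exact hspec
            rw [Function.iterate_succ_apply'] at h1
            exact h1
          have huv : u ≠ v := by
            intro h
            exact Nat.find_min hex' (by omega : j₀ - 1 < j₀) (by rw [← hu]; exact h)
          apply Finset.mem_insert_of_mem
          rw [Finset.mem_biUnion]
          refine ⟨u, by simp [huv, hpu], ?_⟩
          rw [mem_subtreeIn]
          exact ⟨hwrem, j₀ - 1, rfl⟩
      calc (subtreeIn par rem v).card ≤
          (insert v ((univ.filter (fun u => u ≠ v ∧ par u = v)).biUnion (subtreeIn par rem))).card :=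
            Finset.card_le_card hsub
        _ ≤ 1 + ((univ.filter (fun u => u ≠ v ∧ par u = v)).biUnion (subtreeIn par rem)).card := by
            rw [add_comm]; exact Finset.card_insert_le _ _
        _ ≤ 1 + ∑ u ∈ univ.filter (fun u => u ≠ v ∧ par u = v), (subtreeIn par rem u).card := by
            exact Nat.add_le_add_left (Finset.card_biUnion_le) 1
    -- subtrees of vertices not in rem are empty
    have hempty : ∀ u : V, u ∉ rem → subtreeIn par rem u = ∅ := by
      intro u hu
      rw [Finset.eq_empty_iff_forall_notMem]
      intro w hw
      rw [mem_subtreeIn] at hw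
      obtain ⟨hwrem, j, hj⟩ := hw
      exact hu (hj ▸ hup_iter j w hwrem)
    -- candidate set
    set C : Finset V := rem.filter (fun u => s ≤ (subtreeIn par rem u).card) with hC
    have hsN : s ≤ N := by
      have : (s:ℝ) ≤ (N:ℝ) := by nlinarith
      exact_mod_cast this
    have hrC : r ∈ C := by
      rw [hC, Finset.mem_filter, hsubr]
      exact ⟨hr, hsN⟩
    obtain ⟨v, hvC, hvmax⟩ := Finset.exists_max_image C (fun u => Nat.find (hacyc u)) ⟨r, hrC⟩
    have hvrem : v ∈ rem := (Finset.mem_filter.mp hvC).1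
    have hvbig : s ≤ (subtreeIn par rem v).card := (Finset.mem_filter.mp hvC).2
    -- v ≠ r
    have hvr : v ≠ r := by
      intro hvr
      -- then C = {r}, all children subtrees small
      have hchild : ∀ u ∈ univ.filter (fun u => u ≠ r ∧ par u = r),
          (subtreeIn par rem u).card ≤ s - 1 := by
        intro u hu
        simp only [mem_filter, mem_univ, true_and] at hu
        by_cases hurem : u ∈ rem
        · by_cases huC : u ∈ C
          · exfalso
            have hle := hvmax u huC
            rw [hvr] at hle
            rw [depth_root hacyc hroot] at hle
            exact hu.1 (depth_eq_zero hacyc (Nat.le_zero.mp hle))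
          · have : ¬ s ≤ (subtreeIn par rem u).card := by
              intro h
              exact huC (Finset.mem_filter.mpr ⟨hurem, h⟩)
            omega
        · rw [hempty u hurem]; simp
      have hNle : N ≤ 1 + Δ * (s - 1) := by
        have h1 := hdecomp r
        rw [hsubr] at h1
        have h2 : ∑ u ∈ univ.filter (fun u => u ≠ r ∧ par u = r), (subtreeIn par rem u).card
            ≤ (univ.filter (fun u => u ≠ r ∧ par u = r)).card * (s - 1) := by
          calc _ ≤ (univ.filter (fun u => u ≠ r ∧ par u = r)).card • (s - 1) :=
                Finset.sum_le_card_nsmul _ _ _ hchild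
            _ = _ := by rw [smul_eq_mul]
        have h3 : (univ.filter (fun u => u ≠ r ∧ par u = r)).card ≤ Δ := by
          have h := hdeg r
          rw [if_pos rfl, add_zero] at h
          exact h
        calc N ≤ 1 + ∑ u ∈ univ.filter (fun u => u ≠ r ∧ par u = r), (subtreeIn par rem u).card := h1
          _ ≤ 1 + (univ.filter (fun u => u ≠ r ∧ par u = r)).card * (s - 1) := by omega
          _ ≤ 1 + Δ * (s - 1) := by
              exact Nat.add_le_add_left (Nat.mul_le_mul_right _ h3) 1
      -- real contradiction
      have hNr : (N:ℝ) ≤ 1 + (Δ:ℝ) * ((s:ℝ) - 1) := by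
        have : ((1 + Δ * (s - 1) : ℕ) : ℝ) = 1 + (Δ:ℝ) * ((s:ℝ) - 1) := by
          push_cast [Nat.cast_sub (by omega : 1 ≤ s)]
          ring
        calc (N:ℝ) ≤ ((1 + Δ * (s - 1) : ℕ) : ℝ) := by exact_mod_cast hNle
          _ = _ := this
      nlinarith
    -- children of v have small subtrees
    have hchildv : ∀ u ∈ univ.filter (fun u => u ≠ v ∧ par u = v),
        (subtreeIn par rem u).card ≤ s - 1 := by
      intro u hu
      simp only [mem_filter, mem_univ, true_and] at hu
      by_cases hurem : u ∈ rem
      · by_cases huC : u ∈ C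
        · exfalso
          have hle := hvmax u huC
          have hur : u ≠ r := by
            intro h
            apply hvr
            rw [← hu.2, h, hroot]
          have := depth_child hacyc hur
          rw [hu.2] at this
          omega
        · have : ¬ s ≤ (subtreeIn par rem u).card := by
            intro h
            exact huC (Finset.mem_filter.mpr ⟨hurem, h⟩)
          omega
      · rw [hempty u hurem]; simp
    -- size of the cut piece
    set P : Finset V := subtreeIn par rem v with hP
    set s' : ℕ := P.card with hs'
    have hss' : s ≤ s' := hvbig
    have hs'ub : s' ≤ 1 + (Δ - 1) * (s - 1) := by
      have h1 := hdecomp v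
      have h2 : ∑ u ∈ univ.filter (fun u => u ≠ v ∧ par u = v), (subtreeIn par rem u).card
          ≤ (univ.filter (fun u => u ≠ v ∧ par u = v)).card * (s - 1) := by
        calc _ ≤ (univ.filter (fun u => u ≠ v ∧ par u = v)).card • (s - 1) :=
              Finset.sum_le_card_nsmul _ _ _ hchildv
          _ = _ := by rw [smul_eq_mul]
      have h3 : (univ.filter (fun u => u ≠ v ∧ par u = v)).card ≤ Δ - 1 := by
        have := hdeg v
        rw [if_neg hvr] at this
        omega
      calc s' ≤ 1 + ∑ u ∈ univ.filter (fun u => u ≠ v ∧ par u = v), (subtreeIn par rem u).card := h1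
        _ ≤ 1 + (univ.filter (fun u => u ≠ v ∧ par u = v)).card * (s - 1) := by omega
        _ ≤ 1 + (Δ - 1) * (s - 1) := Nat.add_le_add_left (Nat.mul_le_mul_right _ h3) 1
    have hPsub : P ⊆ rem := fun w hw => (mem_subtreeIn.mp hw).1
    have hs'N : s' ≤ N := Finset.card_le_card hPsub
    -- real bounds on s'
    have hs'r_lb : a + 1 ≤ (s':ℝ) := by
      calc a + 1 ≤ (s:ℝ) := hsa
        _ ≤ (s':ℝ) := by exact_mod_cast hss'
    have hs'r_ub : (s':ℝ) ≤ 1 + ((Δ:ℝ) - 1) * (a + 1) := by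
      have h1 : ((1 + (Δ - 1) * (s - 1) : ℕ) : ℝ) = 1 + ((Δ:ℝ) - 1) * ((s:ℝ) - 1) := by
        push_cast [Nat.cast_sub (by omega : 1 ≤ s), Nat.cast_sub (by omega : 1 ≤ Δ)]
        ring
      have h2 : (s':ℝ) ≤ 1 + ((Δ:ℝ) - 1) * ((s:ℝ) - 1) := by
        rw [← h1]; exact_mod_cast hs'ub
      have h3 : (s:ℝ) - 1 ≤ a + 1 := by linarith
      nlinarith
    -- G1 : N - s' > m
    have hG1 : m < (N:ℝ) - (s':ℝ) := by nlinarith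
    -- the remainder
    set rem' : Finset V := rem \ P with hrem'
    have hvP : v ∈ P := by
      rw [hP, mem_subtreeIn]
      exact ⟨hvrem, 0, rfl⟩
    have hrP : r ∉ P := by
      rw [hP, mem_subtreeIn]
      rintro ⟨-, j, hj⟩
      rw [Function.iterate_fixed hroot j] at hj
      exact hvr hj.symm
    have hrrem' : r ∈ rem' := Finset.mem_sdiff.mpr ⟨hr, hrP⟩
    have hup' : ∀ w ∈ rem', par w ∈ rem' := by
      intro w hw
      rw [Finset.mem_sdiff] at hw ⊢
      refine ⟨hup w hw.1, ?_⟩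
      intro hpw
      apply hw.2
      rw [hP, mem_subtreeIn] at hpw ⊢
      obtain ⟨-, j, hj⟩ := hpw
      exact ⟨hw.1, j + 1, by rw [Function.iterate_succ_apply]; exact hj⟩
    have hcard' : rem'.card = N - s' := by
      rw [hrem', Finset.card_sdiff_of_subset hPsub]
    have hs'ltN : s' < N := by
      have h0 : (s':ℝ) < (N:ℝ) := by linarith only [hG1, hm0]
      exact_mod_cast h0
    have hNs'pos : 1 ≤ N - s' := by omega
    have hinv' : (B' + s') + (N - s') ≤ (N - s') ^ 4 := by
      have hcast : ((N - s' : ℕ) : ℝ) = (N:ℝ) - (s':ℝ) := by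
        push_cast [Nat.cast_sub hs'N]
        ring
      have h1 : (B':ℝ) + N ≤ ((N:ℝ) - (s':ℝ)) ^ (4:ℕ) := by
        calc (B':ℝ) + N = m ^ (4:ℕ) := hm4.symm
          _ ≤ ((N:ℝ) - (s':ℝ)) ^ (4:ℕ) := by
              apply pow_le_pow_left₀ hm0 (le_of_lt hG1)
      have h2 : ((B' + s') + (N - s') : ℕ) = B' + N := by omega
      have : ((B' + s') + (N - s') : ℕ) ≤ ((N - s') : ℕ) ^ 4 := by
        rw [h2]
        have : ((B' + N : ℕ) : ℝ) ≤ (((N - s' : ℕ) : ℝ)) ^ (4:ℕ) := by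
          rw [hcast]; push_cast; exact h1
        exact_mod_cast this
      exact this
    -- recursive call
    obtain ⟨k', S', tt', hsub', hcover', hdisj', httmem', hclos', hanc', hdepth', hqual', hsize'⟩ :=
      IH (N - s') (by omega) (B' + s') rem' hcard' (by omega) hrrem' hup' hinv'
    -- assemble
    refine ⟨k' + 1, Fin.snoc S' P, Fin.snoc tt' v, ?_, ?_, ?_, ?_, ?_, ?_, ?_, ?_, ?_⟩
    · -- subsets
      intro i
      induction i using Fin.lastCases with
      | last => rw [Fin.snoc_last]; exact hPsub
      | cast i => rw [Fin.snoc_castSucc]; exact (hsub' i).trans (Finset.sdiff_subset)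
    · -- cover
      intro w hw
      by_cases hwP : w ∈ P
      · exact ⟨Fin.last k', by rw [Fin.snoc_last]; exact hwP⟩
      · obtain ⟨i, hi⟩ := hcover' w (Finset.mem_sdiff.mpr ⟨hw, hwP⟩)
        exact ⟨i.castSucc, by rw [Fin.snoc_castSucc]; exact hi⟩
    · -- disjoint
      intro i j hij
      induction i using Fin.lastCases with
      | last =>
        induction j using Fin.lastCases with
        | last => exact absurd rfl hij
        | cast j =>
          rw [Fin.snoc_last, Fin.snoc_castSucc]
          rw [Finset.disjoint_right]
          intro w hw
          exact (Finset.mem_sdiff.mp (hsub' j hw)).2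
      | cast i =>
        induction j using Fin.lastCases with
        | last =>
          rw [Fin.snoc_last, Fin.snoc_castSucc]
          rw [Finset.disjoint_left]
          intro w hw
          exact (Finset.mem_sdiff.mp (hsub' i hw)).2
        | cast j =>
          rw [Fin.snoc_castSucc, Fin.snoc_castSucc]
          exact hdisj' i j (fun h => hij (by rw [h]))
    · -- tt mem
      intro i
      induction i using Fin.lastCases with
      | last => rw [Fin.snoc_last, Fin.snoc_last]; exact hvP
      | cast i => rw [Fin.snoc_castSucc, Fin.snoc_castSucc]; exact httmem' i
    · -- closure
      intro i w hw hne
      induction i using Fin.lastCases with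
      | last =>
        rw [Fin.snoc_last] at hw ⊢
        rw [Fin.snoc_last] at hne
        rw [hP, mem_subtreeIn] at hw ⊢
        obtain ⟨hwrem, j, hj⟩ := hw
        have hj0 : j ≠ 0 := by
          intro h0; rw [h0] at hj; exact hne hj
        refine ⟨hup w hwrem, j - 1, ?_⟩
        have h1 : par^[(j - 1) + 1] w = v := by
          rw [(by omega : j - 1 + 1 = j)]; exact hj
        rw [Function.iterate_succ_apply] at h1
        exact h1
      | cast i =>
        rw [Fin.snoc_castSucc] at hw ⊢
        rw [Fin.snoc_castSucc] at hne
        exact hclos' i w hw hne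
    · -- ancestry
      intro i w hw
      induction i using Fin.lastCases with
      | last =>
        rw [Fin.snoc_last] at hw ⊢
        exact (mem_subtreeIn.mp hw).2
      | cast i =>
        rw [Fin.snoc_castSucc] at hw ⊢
        exact hanc' i w hw
    · -- depth monotone
      intro i j hij
      induction j using Fin.lastCases with
      | last =>
        rw [Fin.snoc_last]
        induction i using Fin.lastCases with
        | last => rw [Fin.snoc_last]
        | cast i =>
          rw [Fin.snoc_castSucc]
          rcases hqual' i with h | h
          · rw [h, depth_root hacyc hroot]; omega
          · -- tt' i has large subtree in rem', hence in rem, hence in C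
            have hmem : tt' i ∈ rem' := hsub' i (httmem' i)
            have hbig : s ≤ (subtreeIn par rem (tt' i)).card := by
              have hax : a ≤ (((B' + s' : ℕ)):ℝ) ^ ((1:ℝ)/4) := by
                rw [ha]
                apply Real.rpow_le_rpow (by positivity) ?_ (by norm_num)
                push_cast
                linarith [Nat.cast_nonneg (α := ℝ) s']
              have hcc := Nat.ceil_le_ceil hax
              have h2 : (subtreeIn par rem' (tt' i)).card ≤ (subtreeIn par rem (tt' i)).card :=
                Finset.card_le_card (subtreeIn_mono (Finset.sdiff_subset) _)
              have h3 : s ≤ ⌈(((B' + s' : ℕ)):ℝ) ^ ((1:ℝ)/4)⌉₊ + 1 := by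
                rw [hs]
                omega
              omega
            have hCmem : tt' i ∈ C := by
              rw [hC, Finset.mem_filter]
              exact ⟨(Finset.mem_sdiff.mp hmem).1, hbig⟩
            exact hvmax _ hCmem
      | cast j =>
        have hilt : i < Fin.last k' := lt_of_le_of_lt hij (Fin.castSucc_lt_last j)
        have : ∃ i' : Fin k', i = i'.castSucc := by
          refine ⟨⟨i.val, ?_⟩, ?_⟩
          · have := hilt; simp [Fin.lt_def] at this; omega
          · apply Fin.ext; simp
        obtain ⟨i', rfl⟩ := this
        rw [Fin.snoc_castSucc, Fin.snoc_castSucc]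
        exact hdepth' i' j (by rwa [Fin.castSucc_le_castSucc_iff] at hij)
    · -- quality
      intro i
      induction i using Fin.lastCases with
      | last =>
        rw [Fin.snoc_last]
        right
        rw [hs'] at hss'
        rw [hP] at hss'
        exact hss'
      | cast i =>
        rw [Fin.snoc_castSucc]
        rcases hqual' i with h | h
        · exact Or.inl h
        · right
          have hax : ((B':ℝ)) ^ ((1:ℝ)/4) ≤ (((B' + s' : ℕ)):ℝ) ^ ((1:ℝ)/4) := by
            apply Real.rpow_le_rpow (by positivity) ?_ (by norm_num)
            push_cast
            linarith [Nat.cast_nonneg (α := ℝ) s']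
          have h1 := Nat.ceil_le_ceil hax
          have h2 : (subtreeIn par rem' (tt' i)).card ≤ (subtreeIn par rem (tt' i)).card :=
            Finset.card_le_card (subtreeIn_mono (Finset.sdiff_subset) _)
          have hseq : s = ⌈((B':ℝ)) ^ ((1:ℝ)/4)⌉₊ + 1 := by rw [hs, ha]
          omega
    · -- sizes
      intro i
      have hsumall : ∑ j : Fin k', ((S' j).card : ℝ) = ((N - s' : ℕ) : ℝ) := by
        have hbi : rem' = univ.biUnion S' := by
          ext w
          simp only [Finset.mem_biUnion, mem_univ, true_and]
          exact ⟨fun h => hcover' w h, fun ⟨i, hi⟩ => hsub' i hi⟩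
        have : rem'.card = ∑ j : Fin k', (S' j).card := by
          rw [hbi]
          exact Finset.card_biUnion (fun x _ y _ hxy => hdisj' x y hxy)
        rw [← hcard', this]
        push_cast
        rfl
      have hcast : ((N - s' : ℕ) : ℝ) = (N:ℝ) - (s':ℝ) := by
        push_cast [Nat.cast_sub hs'N]; ring
      induction i using Fin.lastCases with
      | last =>
        rw [Fin.snoc_last]
        have hsum : ∑ j ∈ univ.filter (fun j => j < Fin.last k'),
            (((Fin.snoc S' P : Fin (k'+1) → Finset V) j).card : ℝ) = (N:ℝ) - (s':ℝ) := by
          rw [sum_filter_lt_last]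
          rw [← hcast, ← hsumall]
          apply Finset.sum_congr rfl
          intro j _
          rw [Fin.snoc_castSucc]
        rw [hsum]
        have hexpr : (B':ℝ) + (N:ℝ) - ((N:ℝ) - (s':ℝ)) = (B':ℝ) + (s':ℝ) := by ring
        rw [hexpr]
        have hc0 : (0:ℝ) ≤ (B':ℝ) + (s':ℝ) := by positivity
        set c : ℝ := ((B':ℝ) + (s':ℝ)) ^ ((1:ℝ)/4) with hcc
        have hc4 : c ^ (4:ℕ) = (B':ℝ) + (s':ℝ) := by
          rw [hcc, ← Real.rpow_natCast (((B':ℝ) + (s':ℝ)) ^ ((1:ℝ)/4)) 4, ← Real.rpow_mul hc0]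
          norm_num
        have hcnn : 0 ≤ c := Real.rpow_nonneg hc0 _
        constructor
        · -- c ≤ s' : since s'^4 ≥ B' + s'
          have h4 : (B':ℝ) + (s':ℝ) ≤ (s':ℝ) ^ (4:ℕ) := by
            have hs'2 : (2:ℝ) ≤ (s':ℝ) := by linarith
            have ht3 : (a+1)^(3:ℕ) ≤ (s':ℝ)^(3:ℕ) := by
              apply pow_le_pow_left₀ (by linarith) hs'r_lb
            have h5 : (s':ℝ) * (a+1)^(3:ℕ) ≤ (s':ℝ)^(4:ℕ) := by nlinarith [ht3, hs'2]
            have hcube : (1:ℝ) ≤ (a+1)^(3:ℕ) := by nlinarith [ha1, sq_nonneg a, sq_nonneg (a+1), mul_nonneg (mul_nonneg ha0 ha0) ha0]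
            have h6 : a^(4:ℕ) + (s':ℝ) ≤ (s':ℝ) * (a+1)^(3:ℕ) := by
              nlinarith [mul_nonneg (by linarith : (0:ℝ) ≤ (s':ℝ) - (a+1)) (by linarith : (0:ℝ) ≤ (a+1)^(3:ℕ) - 1), ha1]
            linarith [ha4, h5, h6]
          calc c ≤ ((s':ℝ) ^ (4:ℕ)) ^ ((1:ℝ)/4) := by
                rw [hcc]; exact Real.rpow_le_rpow hc0 h4 (by norm_num)
            _ = (s':ℝ) := pow4_quarter (by positivity)
        · -- s' ≤ (5/2) Δ c
          have hac : a ≤ c := by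
            rw [ha, hcc]
            apply Real.rpow_le_rpow (by positivity) (by linarith [Nat.cast_nonneg (α := ℝ) s']) (by norm_num)
          have hDc : (Δ:ℝ) * a ≤ (Δ:ℝ) * c := by
            apply mul_le_mul_of_nonneg_left hac (by linarith)
          nlinarith [hs'r_ub, ha1, hΔr, hDc, mul_le_mul_of_nonneg_right hΔr (by linarith : (0:ℝ) ≤ a)]
      | cast i =>
        rw [Fin.snoc_castSucc]
        have hsum : ∑ j ∈ univ.filter (fun j => j < i.castSucc),
            (((Fin.snoc S' P : Fin (k'+1) → Finset V) j).card : ℝ)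
            = ∑ j ∈ univ.filter (fun j => j < i), ((S' j).card : ℝ) := by
          rw [sum_filter_lt_castSucc]
          apply Finset.sum_congr rfl
          intro j _
          rw [Fin.snoc_castSucc]
        rw [hsum]
        have hexpr : (B':ℝ) + (N:ℝ) - ∑ j ∈ univ.filter (fun j => j < i), ((S' j).card : ℝ)
            = ((B' + s' : ℕ):ℝ) + (rem'.card : ℝ)
              - ∑ j ∈ univ.filter (fun j => j < i), ((S' j).card : ℝ) := by
          rw [hcard']
          push_cast [Nat.cast_sub hs'N]
          ring
        rw [hexpr]
        exact hsize' i

end TPQ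


/-- Modified tree partition lemma (Lemma 3.4).  A rooted tree `(T, r)` on `n` vertices with
maximum degree at most `Δ` can, for any `n₀` with `n ≤ n₀ < n⁴`, be partitioned into
pairwise disjoint rooted subtrees `(T_1, t_1), …, (T_k, t_k)` with `T_i ⊆ T(t_i)`, the
depths of the roots non-decreasing, and `n_{i-1}^{1/4} ≤ |T_i| ≤ (5/2) Δ n_{i-1}^{1/4}`,
where `n_i := n₀ - |T_1 ∪ … ∪ T_i| + 1`.

The encoding of rooted trees via the parent function `par` is as in the tree partition
lemma; since the `S i` are pairwise disjoint, `|T_1 ∪ … ∪ T_i| = ∑_{j ≤ i} |S j|`. -/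
theorem tree_partition_quarter {V : Type*} [Fintype V] [DecidableEq V]
    (n Δ n₀ : ℕ) (hn : 2 ≤ n) (hΔ : 2 ≤ Δ) (hn₀ : n ≤ n₀) (hn₀' : n₀ < n ^ 4)
    (hcard : Fintype.card V = n)
    (r : V) (par : V → V) (hroot : par r = r)
    (hacyc : ∀ v : V, ∃ j : ℕ, par^[j] v = r)
    (hdeg : ∀ v : V,
      (Finset.univ.filter (fun u => u ≠ v ∧ par u = v)).card
        + (if v = r then 0 else 1) ≤ Δ) :
    ∃ (k : ℕ) (S : Fin k → Finset V) (tt : Fin k → V),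
      (∀ v : V, ∃ i, v ∈ S i) ∧
      (∀ i j, i ≠ j → Disjoint (S i) (S j)) ∧
      (∀ i, tt i ∈ S i) ∧
      (∀ i, ∀ v ∈ S i, v ≠ tt i → par v ∈ S i) ∧
      (∀ i, ∀ v ∈ S i, ∃ j : ℕ, par^[j] v = tt i) ∧
      (∀ i j, i ≤ j → Nat.find (hacyc (tt i)) ≤ Nat.find (hacyc (tt j))) ∧
      (∀ i : Fin k,
        ((n₀ : ℝ) - ∑ j ∈ Finset.univ.filter (fun j => j < i), ((S j).card : ℝ) + 1)
            ^ ((1 : ℝ) / 4) ≤ ((S i).card : ℝ) ∧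
        ((S i).card : ℝ) ≤ (5 / 2) * Δ *
          ((n₀ : ℝ) - ∑ j ∈ Finset.univ.filter (fun j => j < i), ((S j).card : ℝ) + 1)
            ^ ((1 : ℝ) / 4)) := by
  have hpow : n₀ + 1 ≤ n ^ 4 := hn₀'
  obtain ⟨k, S, tt, hsub, hcover, hdisj, httmem, hclos, hanc, hdepth, hqual, hsize⟩ :=
    tpq_aux Δ hΔ r par hroot hacyc hdeg n (n₀ + 1 - n) univ
      (by rw [Finset.card_univ, hcard]) (by omega) (mem_univ r)
      (fun v _ => mem_univ (par v)) (by omega)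
  refine ⟨k, S, tt, fun v => hcover v (mem_univ v), hdisj, httmem, hclos, hanc, hdepth, ?_⟩
  intro i
  have hB : ((n₀ + 1 - n : ℕ) : ℝ) = (n₀ : ℝ) + 1 - (n : ℝ) := by
    have h : n ≤ n₀ + 1 := by omega
    rw [Nat.cast_sub h]
    push_cast
    ring
  have hcards : (((univ : Finset V)).card : ℝ) = (n : ℝ) := by
    rw [Finset.card_univ, hcard]
  obtain ⟨h1, h2⟩ := hsize i
  have hE : ((n₀ + 1 - n : ℕ) : ℝ) + (((univ : Finset V)).card : ℝ)
      - ∑ j ∈ Finset.univ.filter (fun j => j < i), ((S j).card : ℝ)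
      = (n₀ : ℝ) - ∑ j ∈ Finset.univ.filter (fun j => j < i), ((S j).card : ℝ) + 1 := by
    rw [hB, hcards]
    ring
  rw [hE] at h1 h2
  exact ⟨h1, h2⟩
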